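/- Keystone chain geometry: (1) if κ(i) ≠ i then |x_i − κ°(i)| ≃ δ_{Q_i}; (2) |x_i − κ°(i)| ≲ |x_i − x| for every x ∈ K_p; (3) every cube Q^{i,j} in the chain S(Q_i) satisfies Q^{i,j} ⊆ C·Q_i and |x^{i,j} − κ°(i)| ≲ δ_{Q^{i,j}}; (4) for any keystone cube Q_s and any i with κ(i) = s: δ_{Q_i} ≥ c·δ_{Q_s}, Q_s ⊆ C·Q_i, and for each fixed dyadic sidelength δ, the number of indices i with κ(i) = s and δ_{Q_i} = δ is at most C. -/

import Mathlib

open scoped ENNReal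

noncomputable section

/-- A dyadic cube `∏_i (j_i 2^k, (j_i+1) 2^k]` in `ℝ^n`, recorded by its scale `k` and
its integer coordinates `j`. -/
structure DyadicCube (n : ℕ) where
  k : ℤ
  j : Fin n → ℤ

namespace DyadicCube

/-- The sidelength `2^k` of a dyadic cube. -/
def sidelength {n : ℕ} (Q : DyadicCube n) : ℝ := 2 ^ Q.k

/-- The underlying (half-open) set of a dyadic cube. -/
def toSet {n : ℕ} (Q : DyadicCube n) : Set (Fin n → ℝ) :=
  {x | ∀ i, (Q.j i : ℝ) * 2 ^ Q.k < x i ∧ x i ≤ ((Q.j i : ℝ) + 1) * 2 ^ Q.k}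

/-- The center of a dyadic cube. -/
def center {n : ℕ} (Q : DyadicCube n) : Fin n → ℝ :=
  fun i => ((Q.j i : ℝ) + 1 / 2) * 2 ^ Q.k

/-- The concentric dilate `cQ` of a dyadic cube `Q` (as a closed cube). -/
def dilate {n : ℕ} (Q : DyadicCube n) (c : ℝ) : Set (Fin n → ℝ) :=
  {x | ∀ i, |x i - Q.center i| ≤ c * Q.sidelength / 2}

end DyadicCube

/-- The unit cube `Q° = (0,1]^n` as a dyadic cube. -/
def unitCube (n : ℕ) : DyadicCube n := ⟨0, fun _ => 0⟩

/-- Monotonicity of the `OK` predicate: if `Q, Q'` are dyadic subcubes of `Q°`, `Q'` is OK and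
`3Q ⊆ 3Q'`, then `Q` is OK. -/
def OKmono {n : ℕ} (OK : DyadicCube n → Prop) : Prop :=
  ∀ Q Q' : DyadicCube n, Q.toSet ⊆ (unitCube n).toSet → Q'.toSet ⊆ (unitCube n).toSet →
    OK Q' → Q.dilate 3 ⊆ Q'.dilate 3 → OK Q

/-- A Calderón–Zygmund cube: an OK dyadic subcube of `Q°` such that every dyadic subcube of
`Q°` properly containing it is not OK. -/
def CZ {n : ℕ} (OK : DyadicCube n → Prop) (Q : DyadicCube n) : Prop :=
  Q.toSet ⊆ (unitCube n).toSet ∧ OK Q ∧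
    ∀ Q' : DyadicCube n, Q'.toSet ⊆ (unitCube n).toSet → Q.toSet ⊂ Q'.toSet → ¬ OK Q'

/-- A keystone cube: a CZ cube `Q` such that every CZ cube meeting `100Q` has sidelength
at least that of `Q`. -/
def Keystone {n : ℕ} (OK : DyadicCube n → Prop) (Q : DyadicCube n) : Prop :=
  CZ OK Q ∧ ∀ Q' : DyadicCube n, CZ OK Q' → (Q'.toSet ∩ Q.dilate 100).Nonempty →
    Q.sidelength ≤ Q'.sidelength

/-- The union of all CZ cubes. -/
def KCZ {n : ℕ} (OK : DyadicCube n → Prop) : Set (Fin n → ℝ) :=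
  ⋃ (Q : DyadicCube n) (_ : CZ OK Q), Q.toSet

/-- The set of keystone points `K_p = Q° \ ⋃ {Q : Q CZ}`. -/
def Kp {n : ℕ} (OK : DyadicCube n → Prop) : Set (Fin n → ℝ) :=
  (unitCube n).toSet \ KCZ OK

/-- The hypotheses on a fixed assignment of keystone chains: for every CZ cube `Q`, the chain
`S Q` starts at `Q`, consists of CZ cubes, has consecutive neighbors and geometric sidelength
decay, and either terminates (after `len Q` steps) at a keystone cube whose center is
`endpt Q`, or is infinite with centers converging to the keystone point `endpt Q ∈ K_p`. -/
def ChainHyp {n : ℕ} (OK : DyadicCube n → Prop) (c C : ℝ)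
    (S : DyadicCube n → ℕ → DyadicCube n) (len : DyadicCube n → ℕ∞)
    (endpt : DyadicCube n → (Fin n → ℝ)) : Prop :=
  ∀ Q : DyadicCube n, CZ OK Q →
    S Q 0 = Q ∧
    (∀ k : ℕ, (k : ℕ∞) < len Q → CZ OK (S Q k)) ∧
    (∀ k : ℕ, ((k : ℕ∞) + 1) < len Q →
      (closure (S Q k).toSet ∩ closure (S Q (k + 1)).toSet).Nonempty) ∧
    (∀ ℓ k : ℕ, ℓ ≤ k → (k : ℕ∞) < len Q →
      (S Q k).sidelength ≤ C * c ^ (k - ℓ) * (S Q ℓ).sidelength) ∧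
    ((∃ L : ℕ, 1 ≤ L ∧ len Q = (L : ℕ∞) ∧ Keystone OK (S Q (L - 1)) ∧
        endpt Q = (S Q (L - 1)).center) ∨
     (len Q = ⊤ ∧ endpt Q ∈ Kp OK ∧
        Filter.Tendsto (fun k => (S Q k).center) Filter.atTop (nhds (endpt Q))))

namespace KeyAux
open DyadicCube

variable {n : ℕ}

lemma side_pos (Q : DyadicCube n) : 0 < Q.sidelength := zpow_pos two_pos _

lemma center_mem (Q : DyadicCube n) : Q.center ∈ Q.toSet := by
  intro i
  have h := side_pos Q
  unfold DyadicCube.center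
  unfold DyadicCube.sidelength at h
  constructor <;> nlinarith

lemma mem_dist {Q : DyadicCube n} {x : Fin n → ℝ} (hx : x ∈ Q.toSet) (i : Fin n) :
    |x i - Q.center i| ≤ Q.sidelength / 2 := by
  obtain ⟨h1, h2⟩ := hx i
  have h := side_pos Q
  unfold DyadicCube.center
  unfold DyadicCube.sidelength at h ⊢
  rw [abs_le]; constructor <;> nlinarith

lemma closure_subset (Q : DyadicCube n) :
    closure Q.toSet ⊆ {x | ∀ i, (Q.j i : ℝ) * 2 ^ Q.k ≤ x i ∧ x i ≤ ((Q.j i : ℝ) + 1) * 2 ^ Q.k} := by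
  apply closure_minimal
  · intro x hx i; exact ⟨(hx i).1.le, (hx i).2⟩
  · have : {x : Fin n → ℝ | ∀ i, (Q.j i : ℝ) * 2 ^ Q.k ≤ x i ∧ x i ≤ ((Q.j i : ℝ) + 1) * 2 ^ Q.k}
        = Set.pi Set.univ (fun i => Set.Icc ((Q.j i : ℝ) * 2 ^ Q.k) (((Q.j i : ℝ) + 1) * 2 ^ Q.k)) := by
      ext x
      simp only [Set.mem_pi, Set.mem_univ, Set.mem_Icc, forall_true_left, Set.mem_setOf_eq,
        forall_const]
    rw [this]
    exact isClosed_set_pi fun i _ => isClosed_Icc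

lemma mem_closure_dist {Q : DyadicCube n} {x : Fin n → ℝ} (hx : x ∈ closure Q.toSet) (i : Fin n) :
    |x i - Q.center i| ≤ Q.sidelength / 2 := by
  obtain ⟨h1, h2⟩ := closure_subset Q hx i
  have h := side_pos Q
  unfold DyadicCube.center
  unfold DyadicCube.sidelength at h ⊢
  rw [abs_le]; constructor <;> nlinarith

lemma not_mem_dist {Q : DyadicCube n} {x : Fin n → ℝ} (hx : x ∉ Q.toSet) :
    Q.sidelength / 2 ≤ ‖Q.center - x‖ := by
  have h := side_pos Q
  simp only [DyadicCube.toSet, Set.mem_setOf_eq, not_forall] at hx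
  obtain ⟨i, hi⟩ := hx
  rw [not_and_or, not_lt, not_le] at hi
  have hb : Q.sidelength / 2 ≤ |Q.center i - x i| := by
    unfold DyadicCube.center
    unfold DyadicCube.sidelength at h ⊢
    rcases hi with hi | hi
    · rw [le_abs]; left; nlinarith
    · rw [le_abs]; right; nlinarith
  calc Q.sidelength / 2 ≤ |Q.center i - x i| := hb
    _ = ‖(Q.center - x) i‖ := by simp [Real.norm_eq_abs]
    _ ≤ ‖Q.center - x‖ := norm_le_pi_norm _ i

lemma neighbor_dist {Q Q' : DyadicCube n}
    (h : (closure Q.toSet ∩ closure Q'.toSet).Nonempty) :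
    ‖Q.center - Q'.center‖ ≤ (Q.sidelength + Q'.sidelength) / 2 := by
  obtain ⟨z, hz, hz'⟩ := h
  have h1 := side_pos Q
  have h2 := side_pos Q'
  rw [pi_norm_le_iff_of_nonneg (by linarith)]
  intro i
  have b1 := mem_closure_dist hz i
  have b2 := mem_closure_dist hz' i
  rw [abs_sub_comm] at b1
  have htri := abs_sub_le (Q.center i) (z i) (Q'.center i)
  simp only [Pi.sub_apply, Real.norm_eq_abs]
  linarith

lemma interval_subset {k k' j j' : ℤ} (hk : k ≤ k') {x : ℝ}
    (hx1 : (j:ℝ)*2^k < x) (hx2 : x ≤ ((j:ℝ)+1)*2^k)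
    (hx1' : (j':ℝ)*2^k' < x) (hx2' : x ≤ ((j':ℝ)+1)*2^k') :
    ∀ y : ℝ, (j:ℝ)*2^k < y → y ≤ ((j:ℝ)+1)*2^k →
      (j':ℝ)*2^k' < y ∧ y ≤ ((j':ℝ)+1)*2^k' := by
  set M : ℤ := 2 ^ (k' - k).toNat with hMdef
  have hp : (0:ℝ) < 2 ^ k := zpow_pos two_pos _
  have hM : (M:ℝ) * 2 ^ k = 2 ^ k' := by
    rw [hMdef]
    push_cast
    rw [← zpow_natCast (2:ℝ), Int.toNat_of_nonneg (sub_nonneg.2 hk), ← zpow_add₀ (two_ne_zero)]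
    ring_nf
  have h1 : (j':ℝ) * M < j + 1 := by
    have hx := hx1'.trans_le hx2
    rw [← hM] at hx
    nlinarith
  have h2 : (j:ℝ) < ((j':ℝ)+1) * M := by
    have hx := hx1.trans_le hx2'
    rw [← hM] at hx
    nlinarith
  have hj1 : j' * M ≤ j := by
    have : (j' * M : ℤ) < j + 1 := by exact_mod_cast h1
    omega
  have hj2 : j + 1 ≤ (j' + 1) * M := by
    have : (j : ℤ) < (j' + 1) * M := by exact_mod_cast h2
    omega
  intro y hy1 hy2
  have hj1' : ((j':ℝ) * M) ≤ j := by exact_mod_cast hj1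
  have hj2' : ((j:ℝ) + 1) ≤ ((j':ℝ) + 1) * M := by exact_mod_cast hj2
  constructor
  · calc (j':ℝ) * 2 ^ k' = (j' * M) * 2 ^ k := by rw [← hM]; ring
      _ ≤ j * 2 ^ k := by nlinarith
      _ < y := hy1
  · calc y ≤ ((j:ℝ) + 1) * 2 ^ k := hy2
      _ ≤ (((j':ℝ) + 1) * M) * 2 ^ k := by nlinarith
      _ = ((j':ℝ)+1) * 2 ^ k' := by rw [← hM]; ring

lemma toSet_subset_of_le {Q Q' : DyadicCube n} (hk : Q.k ≤ Q'.k)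
    (hx : (Q.toSet ∩ Q'.toSet).Nonempty) : Q.toSet ⊆ Q'.toSet := by
  obtain ⟨x, hx1, hx2⟩ := hx
  intro y hy i
  exact interval_subset hk (hx1 i).1 (hx1 i).2 (hx2 i).1 (hx2 i).2 (y i) (hy i).1 (hy i).2

lemma toSet_ssubset (hn : 1 ≤ n) {Q Q' : DyadicCube n} (hk : Q.k < Q'.k)
    (hx : (Q.toSet ∩ Q'.toSet).Nonempty) : Q.toSet ⊂ Q'.toSet := by
  rw [Set.ssubset_iff_of_subset (toSet_subset_of_le hk.le hx)]
  set i₀ : Fin n := ⟨0, hn⟩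
  set a : ℝ := (Q.j i₀ : ℝ) * 2 ^ Q.k - (Q'.j i₀ : ℝ) * 2 ^ Q'.k with ha
  set t : ℝ := if 0 < a then min a (2 ^ Q'.k) else 2 ^ Q'.k with htdef
  have hp' : (0:ℝ) < 2 ^ Q'.k := zpow_pos two_pos _
  have hp : (0:ℝ) < 2 ^ Q.k := zpow_pos two_pos _
  have hpp : (2:ℝ) ^ Q.k < 2 ^ Q'.k := zpow_lt_zpow_right₀ one_lt_two hk
  have ht1 : 0 < t := by
    rw [htdef]; split_ifs with h
    · exact lt_min h hp'
    · exact hp'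
  have ht2 : t ≤ 2 ^ Q'.k := by
    rw [htdef]; split_ifs with h
    · exact min_le_right _ _
    · exact le_refl _
  refine ⟨fun i => (Q'.j i : ℝ) * 2 ^ Q'.k + t, fun i => ?_, ?_⟩
  · constructor
    · show (Q'.j i : ℝ) * 2 ^ Q'.k < (Q'.j i : ℝ) * 2 ^ Q'.k + t
      linarith
    · show (Q'.j i : ℝ) * 2 ^ Q'.k + t ≤ ((Q'.j i : ℝ) + 1) * 2 ^ Q'.k
      rw [add_mul, one_mul]
      linarith
  · intro hy
    obtain ⟨hl, hr⟩ := hy i₀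
    have hl' : (Q.j i₀ : ℝ) * 2 ^ Q.k < (Q'.j i₀ : ℝ) * 2 ^ Q'.k + t := hl
    have hr' : (Q'.j i₀ : ℝ) * 2 ^ Q'.k + t ≤ ((Q.j i₀ : ℝ) + 1) * 2 ^ Q.k := hr
    clear hl hr
    rw [htdef] at hl' hr'
    split_ifs at hl' hr' with h
    · have hma : min a (2 ^ Q'.k) ≤ a := min_le_left _ _
      rw [ha] at hma h
      linarith
    · push_neg at h
      rw [ha] at h
      rw [add_mul, one_mul] at hr'
      linarith

lemma cz_eq_of_same_k {OK : DyadicCube n → Prop} {Q Q' : DyadicCube n}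
    (hk : Q.k = Q'.k) {x : Fin n → ℝ} (hx : x ∈ Q.toSet) (hx' : x ∈ Q'.toSet) : Q = Q' := by
  have hp : (0:ℝ) < 2 ^ Q.k := zpow_pos two_pos _
  have hj : Q.j = Q'.j := by
    funext i
    obtain ⟨a1, a2⟩ := hx i
    obtain ⟨b1, b2⟩ := hx' i
    rw [← hk] at b1 b2
    have e1 : (Q'.j i : ℝ) < Q.j i + 1 := by nlinarith
    have e2 : (Q.j i : ℝ) < Q'.j i + 1 := by nlinarith
    have e1' : Q'.j i < Q.j i + 1 := by exact_mod_cast e1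
    have e2' : Q.j i < Q'.j i + 1 := by exact_mod_cast e2
    omega
  cases Q; cases Q'
  simp_all

lemma cz_disjoint (hn : 1 ≤ n) {OK : DyadicCube n → Prop} {Q Q' : DyadicCube n}
    (hQ : CZ OK Q) (hQ' : CZ OK Q') (hne : Q ≠ Q') : Q.toSet ∩ Q'.toSet = ∅ := by
  by_contra h
  have hx : (Q.toSet ∩ Q'.toSet).Nonempty := Set.nonempty_iff_ne_empty.mpr h
  obtain ⟨x, hx1, hx2⟩ := hx
  rcases lt_trichotomy Q.k Q'.k with hk | hk | hk
  · exact hQ.2.2 Q' hQ'.1 (toSet_ssubset hn hk ⟨x, hx1, hx2⟩) hQ'.2.1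
  · exact hne (cz_eq_of_same_k (OK := OK) hk hx1 hx2)
  · exact hQ'.2.2 Q hQ.1 (toSet_ssubset hn hk ⟨x, hx2, hx1⟩) hQ.2.1

end KeyAux

namespace KeyAux

lemma geom_bound {c : ℝ} (h : 0 ≤ c) (h1 : c < 1) (d : ℕ) :
    ∑ r ∈ Finset.range d, c ^ r ≤ 1/(1-c) := by
  rw [geom_sum_eq h1.ne d]
  have h2 : (c ^ d - 1)/(c - 1) = (1 - c^d)/(1 - c) := by rw [← neg_div_neg_eq]; ring_nf
  rw [h2]
  gcongr
  · linarith [pow_nonneg h d]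

variable {n : ℕ} {OK : DyadicCube n → Prop} {c C : ℝ}
  {S : DyadicCube n → ℕ → DyadicCube n} {len : DyadicCube n → ℕ∞}
  {endpt : DyadicCube n → (Fin n → ℝ)}

lemma chain_tele (hc : 0 < c) (hc1 : c < 1) (hC : 1 ≤ C)
    (hch : ChainHyp OK c C S len endpt) {Q : DyadicCube n} (hQ : CZ OK Q)
    (k : ℕ) :
    ∀ d : ℕ, ((k + d : ℕ) : ℕ∞) < len Q →
      ‖(S Q k).center - (S Q (k + d)).center‖
        ≤ C * (S Q k).sidelength * ∑ r ∈ Finset.range d, c ^ r := by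
  obtain ⟨h1, h2, h3, h4, h5⟩ := hch Q hQ
  intro d
  induction d with
  | zero => intro _; simp
  | succ d ih =>
    intro hm
    have hm' : ((k + d : ℕ) : ℕ∞) < len Q :=
      lt_of_le_of_lt (by exact_mod_cast Nat.le_succ (k+d)) hm
    have hnb : (closure (S Q (k+d)).toSet ∩ closure (S Q (k+d+1)).toSet).Nonempty := by
      apply h3
      rw [show ((k+d : ℕ) : ℕ∞) + 1 = ((k+d+1 : ℕ) : ℕ∞) by push_cast; ring]
      exact_mod_cast hm
    have hb1 : (S Q (k+d)).sidelength ≤ C * c ^ d * (S Q k).sidelength := by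
      have := h4 k (k+d) (Nat.le_add_right _ _) hm'
      rwa [show k + d - k = d by omega] at this
    have hb2 : (S Q (k+d+1)).sidelength ≤ C * c ^ (d+1) * (S Q k).sidelength := by
      have := h4 k (k+d+1) (by omega) (by exact_mod_cast hm)
      rwa [show k + d + 1 - k = d + 1 by omega] at this
    have hpow : c ^ (d+1) ≤ c ^ d := pow_le_pow_of_le_one hc.le hc1.le (Nat.le_succ d)
    have hδ : (0:ℝ) < (S Q k).sidelength := side_pos _
    have hmono : C * c ^ (d+1) * (S Q k).sidelength ≤ C * c ^ d * (S Q k).sidelength :=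
      mul_le_mul_of_nonneg_right
        (mul_le_mul_of_nonneg_left hpow (by linarith : (0:ℝ) ≤ C)) hδ.le
    have htri : ‖(S Q k).center - (S Q (k+(d+1))).center‖
        ≤ ‖(S Q k).center - (S Q (k+d)).center‖
          + ‖(S Q (k+d)).center - (S Q (k+d+1)).center‖ := by
      have := dist_triangle ((S Q k).center) ((S Q (k+d)).center) ((S Q (k+d+1)).center)
      simpa [dist_eq_norm, show k + (d+1) = k + d + 1 from rfl] using this
    have hnd := neighbor_dist hnb
    calc ‖(S Q k).center - (S Q (k+(d+1))).center‖
        ≤ ‖(S Q k).center - (S Q (k+d)).center‖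
          + ‖(S Q (k+d)).center - (S Q (k+d+1)).center‖ := htri
      _ ≤ C * (S Q k).sidelength * ∑ r ∈ Finset.range d, c ^ r
          + C * c ^ d * (S Q k).sidelength := by
          have := ih hm'
          linarith
      _ = C * (S Q k).sidelength * ∑ r ∈ Finset.range (d+1), c ^ r := by
          rw [Finset.sum_range_succ]; ring

lemma chain_dist (hc : 0 < c) (hc1 : c < 1) (hC : 1 ≤ C)
    (hch : ChainHyp OK c C S len endpt) {Q : DyadicCube n} (hQ : CZ OK Q)
    {k m : ℕ} (hkm : k ≤ m) (hm : ((m : ℕ) : ℕ∞) < len Q) :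
    ‖(S Q k).center - (S Q m).center‖ ≤ C / (1-c) * (S Q k).sidelength := by
  obtain ⟨d, rfl⟩ := Nat.exists_eq_add_of_le hkm
  have ht := chain_tele hc hc1 hC hch hQ k d hm
  have hg := geom_bound hc.le hc1 d
  have hδ : (0:ℝ) < (S Q k).sidelength := side_pos _
  calc ‖(S Q k).center - (S Q (k + d)).center‖
      ≤ C * (S Q k).sidelength * ∑ r ∈ Finset.range d, c ^ r := ht
    _ ≤ C * (S Q k).sidelength * (1/(1-c)) := by
        have hCδ : (0:ℝ) ≤ C * (S Q k).sidelength := by nlinarith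
        exact mul_le_mul_of_nonneg_left hg hCδ
    _ = C / (1-c) * (S Q k).sidelength := by ring

lemma endpt_dist (hc : 0 < c) (hc1 : c < 1) (hC : 1 ≤ C)
    (hch : ChainHyp OK c C S len endpt) {Q : DyadicCube n} (hQ : CZ OK Q)
    {k : ℕ} (hk : ((k : ℕ) : ℕ∞) < len Q) :
    ‖(S Q k).center - endpt Q‖ ≤ C / (1-c) * (S Q k).sidelength := by
  obtain ⟨h1, h2, h3, h4, h5⟩ := hch Q hQ
  rcases h5 with ⟨L, hL1, hlen, _, hend⟩ | ⟨htop, _, htend⟩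
  · rw [hend]
    have hkL : k < L := by rw [hlen] at hk; exact_mod_cast hk
    have hL : ((L - 1 : ℕ) : ℕ∞) < len Q := by
      rw [hlen]; exact_mod_cast Nat.sub_lt (by omega) one_pos
    exact chain_dist hc hc1 hC hch hQ (by omega) hL
  · have hev : ∀ m, k ≤ m → ‖(S Q k).center - (S Q m).center‖
        ≤ C / (1-c) * (S Q k).sidelength := fun m hm =>
      chain_dist hc hc1 hC hch hQ hm (htop ▸ ENat.coe_lt_top m)
    have htt : Filter.Tendsto (fun m => ‖(S Q k).center - (S Q m).center‖) Filter.atTop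
        (nhds ‖(S Q k).center - endpt Q‖) := (tendsto_const_nhds.sub htend).norm
    exact le_of_tendsto htt (Filter.eventually_atTop.mpr ⟨k, hev⟩)

lemma len_pos (hch : ChainHyp OK c C S len endpt) {Q : DyadicCube n} (hQ : CZ OK Q) :
    ((0 : ℕ) : ℕ∞) < len Q := by
  obtain ⟨_, _, _, _, h5⟩ := hch Q hQ
  rcases h5 with ⟨L, hL1, hlen, _, _⟩ | ⟨htop, _, _⟩
  · rw [hlen]; exact_mod_cast hL1
  · rw [htop]; exact_mod_cast ENat.coe_lt_top 0

end KeyAux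

/-- **Keystone chain geometry (Lemma `keygeomlem`).**  Let `κ°(i) = endpt Q_i` be the endpoint
(keystone cube center or keystone point) of the chain of the CZ cube `Q_i`.  Then:
(1) if `κ(i) ≠ i` then `|x_i − κ°(i)| ≃ δ_{Q_i}`;
(2) `|x_i − κ°(i)| ≲ |x_i − x|` for every `x ∈ K_p`;
(3) every cube `Q^{i,j}` of the chain `S(Q_i)` satisfies `Q^{i,j} ⊆ C₁ Q_i` and
    `|x^{i,j} − κ°(i)| ≲ δ_{Q^{i,j}}`;
(4) for a keystone cube `Q_s` and any `i` with `κ(i) = s`: `δ_{Q_i} ≥ c₁ δ_{Q_s}` and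
    `Q_s ⊆ C₁ Q_i`; moreover for each fixed sidelength `δ`, the number of such `i` with
    `δ_{Q_i} = δ` is at most `N`. -/
theorem stmt16 (n : ℕ) (hn : 1 ≤ n) (c C : ℝ) (hc : 0 < c) (hc1 : c < 1) (hC : 1 ≤ C) :
    ∃ c₁ C₁ : ℝ, ∃ N : ℕ, 0 < c₁ ∧ 0 < C₁ ∧
      ∀ OK : DyadicCube n → Prop, OKmono OK →
      ∀ (S : DyadicCube n → ℕ → DyadicCube n) (len : DyadicCube n → ℕ∞)
        (endpt : DyadicCube n → (Fin n → ℝ)),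
        ChainHyp OK c C S len endpt →
        (∀ Q : DyadicCube n, CZ OK Q → ∀ x ∈ Kp OK, ∀ y ∈ Q.toSet,
          Q.sidelength ≤ ‖y - x‖) →
        (∀ Q : DyadicCube n, CZ OK Q → endpt Q ≠ Q.center →
            c₁ * Q.sidelength ≤ ‖Q.center - endpt Q‖ ∧
            ‖Q.center - endpt Q‖ ≤ C₁ * Q.sidelength) ∧
        (∀ Q : DyadicCube n, CZ OK Q → ∀ x ∈ Kp OK,
            ‖Q.center - endpt Q‖ ≤ C₁ * ‖Q.center - x‖) ∧
        (∀ Q : DyadicCube n, CZ OK Q → ∀ k : ℕ, (k : ℕ∞) < len Q →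
            (S Q k).toSet ⊆ Q.dilate C₁ ∧
            ‖(S Q k).center - endpt Q‖ ≤ C₁ * (S Q k).sidelength) ∧
        (∀ Qs : DyadicCube n, Keystone OK Qs → ∀ Q : DyadicCube n, CZ OK Q →
            (∃ L : ℕ, 1 ≤ L ∧ len Q = (L : ℕ∞) ∧ S Q (L - 1) = Qs) →
            c₁ * Qs.sidelength ≤ Q.sidelength ∧ Qs.toSet ⊆ Q.dilate C₁) ∧
        (∀ Qs : DyadicCube n, Keystone OK Qs → ∀ δ : ℝ,
            {Q : DyadicCube n | CZ OK Q ∧ Q.sidelength = δ ∧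
              ∃ L : ℕ, 1 ≤ L ∧ len Q = (L : ℕ∞) ∧ S Q (L - 1) = Qs}.Finite ∧
            {Q : DyadicCube n | CZ OK Q ∧ Q.sidelength = δ ∧
              ∃ L : ℕ, 1 ≤ L ∧ len Q = (L : ℕ∞) ∧ S Q (L - 1) = Qs}.ncard ≤ N) := by
  have hc' : (0:ℝ) < 1 - c := by linarith
  have hC0 : (0:ℝ) < C := lt_of_lt_of_le one_pos hC
  refine ⟨1/(2*C), 4*C/(1-c), (⌈2*C/(1-c)⌉₊ + 1)^n, by positivity, by positivity, ?_⟩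
  intro OK hOK S len endpt hch hdist
  have hCA : C ≤ C/(1-c) := by
    rw [le_div_iff₀ hc']; nlinarith
  have hcoef : C/(1-c) ≤ 4*C/(1-c) := by
    rw [div_le_div_iff₀ hc' hc']; nlinarith
  -- upper bound on distance from center to endpoint
  have key0 : ∀ Q : DyadicCube n, CZ OK Q →
      ‖Q.center - endpt Q‖ ≤ C/(1-c) * Q.sidelength := by
    intro Q hQ
    have h1 := (hch Q hQ).1
    have := KeyAux.endpt_dist hc hc1 hC hch hQ (KeyAux.len_pos hch hQ)
    rwa [h1] at this
  have key0' : ∀ Q : DyadicCube n, CZ OK Q →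
      ‖Q.center - endpt Q‖ ≤ 4*C/(1-c) * Q.sidelength := by
    intro Q hQ
    exact (key0 Q hQ).trans
      (mul_le_mul_of_nonneg_right hcoef (KeyAux.side_pos Q).le)
  -- part 3a
  have key3a : ∀ Q : DyadicCube n, CZ OK Q → ∀ k : ℕ, (k : ℕ∞) < len Q →
      (S Q k).toSet ⊆ Q.dilate (4*C/(1-c)) := by
    intro Q hQ k hk x hx i
    have h1 := (hch Q hQ).1
    have hδ0 := KeyAux.side_pos Q
    have b1 := KeyAux.mem_dist hx i
    have b2 : ‖(S Q k).center - Q.center‖ ≤ C/(1-c) * Q.sidelength := by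
      have := KeyAux.chain_dist hc hc1 hC hch hQ (Nat.zero_le k) hk
      rw [h1] at this
      rwa [norm_sub_rev] at this
    have b2i : |(S Q k).center i - Q.center i| ≤ C/(1-c) * Q.sidelength := by
      have := (norm_le_pi_norm ((S Q k).center - Q.center) i).trans b2
      simpa [Real.norm_eq_abs] using this
    have b3 : (S Q k).sidelength ≤ C * Q.sidelength := by
      have h4 := (hch Q hQ).2.2.2.1 0 k (Nat.zero_le k) hk
      rw [h1] at h4
      simp only [Nat.sub_zero] at h4
      have hpow : c ^ k ≤ 1 := pow_le_one₀ hc.le hc1.le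
      have := mul_le_mul_of_nonneg_right
        (mul_le_mul_of_nonneg_left hpow hC0.le) hδ0.le
      rw [mul_one] at this
      linarith
    have habs := abs_sub_le (x i) ((S Q k).center i) (Q.center i)
    have hmul : C * Q.sidelength ≤ C/(1-c) * Q.sidelength :=
      mul_le_mul_of_nonneg_right hCA hδ0.le
    have hmul0 : (0:ℝ) ≤ C/(1-c) * Q.sidelength := by positivity
    obtain ⟨B, hB⟩ : ∃ B : ℝ, B = C/(1-c) := ⟨_, rfl⟩
    rw [show (4*C/(1-c) : ℝ) = 4*B by rw [hB]; ring]
    rw [← hB] at b2i hmul hmul0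
    linarith
  -- part 3b
  have key3b : ∀ Q : DyadicCube n, CZ OK Q → ∀ k : ℕ, (k : ℕ∞) < len Q →
      ‖(S Q k).center - endpt Q‖ ≤ 4*C/(1-c) * (S Q k).sidelength := by
    intro Q hQ k hk
    exact (KeyAux.endpt_dist hc hc1 hC hch hQ hk).trans
      (mul_le_mul_of_nonneg_right hcoef (KeyAux.side_pos _).le)
  refine ⟨?_, ?_, ?_, ?_, ?_⟩
  · -- part 1
    intro Q hQ hne
    have hδ := KeyAux.side_pos Q
    refine ⟨?_, key0' Q hQ⟩
    have hd2 : Q.sidelength / 2 ≤ ‖Q.center - endpt Q‖ := by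
      obtain ⟨h1, h2, h3, h4, h5⟩ := hch Q hQ
      rcases h5 with ⟨L, hL1, hlen, hkey, hend⟩ | ⟨_, hKp', _⟩
      · have hL : ((L - 1 : ℕ) : ℕ∞) < len Q := by
          rw [hlen]; exact_mod_cast Nat.sub_lt (by omega) one_pos
        have hCZ' : CZ OK (S Q (L-1)) := h2 (L-1) hL
        have hne' : S Q (L-1) ≠ Q := by
          intro he
          exact hne (by rw [hend, he])
        have hdisj := KeyAux.cz_disjoint hn hCZ' hQ hne'
        have hnotmem : endpt Q ∉ Q.toSet := by
          rw [hend]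
          intro hmem
          exact Set.eq_empty_iff_forall_notMem.mp hdisj ((S Q (L-1)).center)
            ⟨KeyAux.center_mem _, hmem⟩
        exact KeyAux.not_mem_dist hnotmem
      · have := hdist Q hQ (endpt Q) hKp' Q.center (KeyAux.center_mem Q)
        linarith
    have : 1/(2*C) * Q.sidelength ≤ Q.sidelength / 2 := by
      rw [div_mul_eq_mul_div, one_mul, div_le_div_iff₀ (by linarith) two_pos]
      nlinarith
    linarith
  · -- part 2
    intro Q hQ x hx
    have := hdist Q hQ x hx Q.center (KeyAux.center_mem Q)
    have h0 := key0 Q hQ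
    have hAx : C/(1-c) * Q.sidelength ≤ C/(1-c) * ‖Q.center - x‖ :=
      mul_le_mul_of_nonneg_left this (by positivity)
    have hAx2 : C/(1-c) * ‖Q.center - x‖ ≤ 4*C/(1-c) * ‖Q.center - x‖ :=
      mul_le_mul_of_nonneg_right hcoef (norm_nonneg _)
    exact h0.trans (hAx.trans hAx2)
  · -- part 3
    intro Q hQ k hk
    exact ⟨key3a Q hQ k hk, key3b Q hQ k hk⟩
  · -- part 4ab
    rintro Qs hkeys Q hQ ⟨L, hL1, hlen, hS⟩
    have hL : ((L - 1 : ℕ) : ℕ∞) < len Q := by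
      rw [hlen]; exact_mod_cast Nat.sub_lt (by omega) one_pos
    constructor
    · have h4 := (hch Q hQ).2.2.2.1 0 (L-1) (Nat.zero_le _) hL
      rw [(hch Q hQ).1, hS] at h4
      simp only [Nat.sub_zero] at h4
      have hpow : c ^ (L-1) ≤ 1 := pow_le_one₀ hc.le hc1.le
      have hδQ := KeyAux.side_pos Q
      have hδs := KeyAux.side_pos Qs
      have hb : Qs.sidelength ≤ C * Q.sidelength := by
        have := mul_le_mul_of_nonneg_right
          (mul_le_mul_of_nonneg_left hpow hC0.le) hδQ.le
        rw [mul_one] at this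
        linarith
      rw [div_mul_eq_mul_div, one_mul, div_le_iff₀ (by linarith : (0:ℝ) < 2*C)]
      nlinarith
    · have := key3a Q hQ (L-1) hL
      rwa [hS] at this
  · -- part 4c : counting
    intro Qs hkeys δ
    set s : Set (DyadicCube n) := {Q : DyadicCube n | CZ OK Q ∧ Q.sidelength = δ ∧
        ∃ L : ℕ, 1 ≤ L ∧ len Q = (L : ℕ∞) ∧ S Q (L - 1) = Qs} with hs
    rcases Set.eq_empty_or_nonempty s with hemp | ⟨Q₀, hQ₀⟩
    · rw [hemp]
      exact ⟨Set.finite_empty, by simp⟩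
    · have hδpos : 0 < δ := hQ₀.2.1 ▸ KeyAux.side_pos Q₀
      set M : ℕ := ⌈2*C/(1-c)⌉₊ with hM
      set aI : Fin n → ℤ := fun i => ⌈Qs.center i / δ - 1/2 - C/(1-c)⌉ with haI
      set F : Finset (Fin n → ℤ) :=
        Fintype.piFinset (fun i => Finset.Icc (aI i) (aI i + M)) with hF
      have hcent : ∀ Q ∈ s, ‖Q.center - Qs.center‖ ≤ C/(1-c) * δ := by
        rintro Q ⟨hQcz, hQδ, L, hL1, hlen, hSs⟩
        have hL : ((L - 1 : ℕ) : ℕ∞) < len Q := by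
          rw [hlen]; exact_mod_cast Nat.sub_lt (by omega) one_pos
        have := KeyAux.chain_dist hc hc1 hC hch hQcz (Nat.zero_le (L-1)) hL
        rwa [(hch Q hQcz).1, hSs, hQδ] at this
      have hmem : ∀ Q ∈ s, ∀ i, Q.j i ∈ Finset.Icc (aI i) (aI i + M) := by
        intro Q hQs i
        have hci : |Q.center i - Qs.center i| ≤ C/(1-c) * δ := by
          have := (norm_le_pi_norm (Q.center - Qs.center) i).trans (hcent Q hQs)
          simpa [Real.norm_eq_abs] using this
        have hcenter : Q.center i = ((Q.j i : ℝ) + 1/2) * δ := by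
          rw [← hQs.2.1]; rfl
        rw [hcenter, abs_le] at hci
        obtain ⟨hlo, hhi⟩ := hci
        have hlow : Qs.center i / δ - 1/2 - C/(1-c) ≤ (Q.j i : ℝ) := by
          have h1 : (Qs.center i - C/(1-c)*δ)/δ ≤ (Q.j i : ℝ) + 1/2 := by
            rw [div_le_iff₀ hδpos]; nlinarith
          have h2 : (Qs.center i - C/(1-c)*δ)/δ = Qs.center i / δ - C/(1-c) := by
            rw [sub_div, mul_div_assoc, div_self hδpos.ne', mul_one]
          linarith
        have hhigh : (Q.j i : ℝ) ≤ Qs.center i / δ + C/(1-c) - 1/2 := by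
          have h1 : (Q.j i : ℝ) + 1/2 ≤ (Qs.center i + C/(1-c)*δ)/δ := by
            rw [le_div_iff₀ hδpos]; nlinarith
          have h2 : (Qs.center i + C/(1-c)*δ)/δ = Qs.center i / δ + C/(1-c) := by
            rw [add_div, mul_div_assoc, div_self hδpos.ne', mul_one]
          linarith
        rw [Finset.mem_Icc]
        constructor
        · rw [haI]
          exact Int.ceil_le.mpr hlow
        · have hceil : Qs.center i / δ - 1/2 - C/(1-c) ≤ (aI i : ℝ) := by
            rw [haI]; exact Int.le_ceil _
          have hMle : 2*C/(1-c) ≤ (M : ℝ) := by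
            rw [hM]; exact Nat.le_ceil _
          obtain ⟨B, hB⟩ : ∃ B : ℝ, B = C/(1-c) := ⟨_, rfl⟩
          rw [← hB] at hhigh hceil
          rw [show (2*C/(1-c) : ℝ) = 2*B by rw [hB]; ring] at hMle
          have : (Q.j i : ℝ) ≤ (aI i : ℝ) + (M : ℝ) := by linarith
          exact_mod_cast this
      have hinj : Set.InjOn (fun Q : DyadicCube n => Q.j) s := by
        intro Q hQ1 Q' hQ2 hjj
        have hk : Q.k = Q'.k := by
          have := hQ1.2.1.trans hQ2.2.1.symm
          exact zpow_right_injective₀ (by norm_num : (0:ℝ) < 2) (by norm_num) this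
        cases Q; cases Q'
        simp_all
      have hmapF : ∀ Q ∈ s, Q.j ∈ (F : Set (Fin n → ℤ)) := by
        intro Q hQs
        simp only [hF, Finset.mem_coe, Fintype.mem_piFinset]
        exact hmem Q hQs
      have hFfin : (↑F : Set (Fin n → ℤ)).Finite := F.finite_toSet
      have hfin : s.Finite := by
        apply Set.Finite.of_finite_image ?_ hinj
        apply hFfin.subset
        rintro _ ⟨Q, hQs, rfl⟩
        exact hmapF Q hQs
      refine ⟨hfin, ?_⟩
      have hcard : ∀ i, (Finset.Icc (aI i) (aI i + (M:ℤ))).card = M + 1 := by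
        intro i; rw [Int.card_Icc]; omega
      calc s.ncard ≤ (↑F : Set (Fin n → ℤ)).ncard :=
            Set.ncard_le_ncard_of_injOn _ hmapF hinj hFfin
        _ = F.card := Set.ncard_coe_finset F
        _ = ∏ i, (Finset.Icc (aI i) (aI i + (M:ℤ))).card := Fintype.card_piFinset _
        _ = (M + 1)^n := by
            simp [hcard, Finset.prod_const]
        _ = (⌈2*C/(1-c)⌉₊ + 1)^n := by rw [hM]

end
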